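/- For the caterpillar graph on 6ℓ−1 vertices with the specified single-basin potential W, the vector ψ defined by ψ(B₀)=2/3, ψ(B_j)=(2/3)^j for 1≤j≤ℓ, ψ(C_ℓ)=(1/8)(2/3)^ℓ, ψ(C₁)=(2/3)(11/12 − 1/(8ℓ)), and ψ(C_j)=((2/3)−j/(8ℓ))(2/3)^j for 2≤j≤ℓ−1 is an eigenvector of H_{G,W} with eigenvalue zero, and all its entries are positive, so it is the ground state of H_{G,W}. -/

import Mathlib

open Matrix

noncomputable def hamiltonian {V : Type*} [Fintype V] [DecidableEq V]
    (G : SimpleGraph V) [DecidableRel G.Adj] (W : V → ℝ) : Matrix V V ℝ :=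
  G.lapMatrix ℝ + Matrix.diagonal W

/-- Vertices of the caterpillar graph on `6ℓ − 1` vertices: a spine path of
`2ℓ+1` vertices (positions `0,…,2ℓ`, center `ℓ`), and for each interior spine
position `k+1` (for `k : Fin (2ℓ−1)`) two pendant legs (top/bottom). -/
abbrev CatV (ℓ : ℕ) : Type := Fin (2 * ℓ + 1) ⊕ (Fin (2 * ℓ - 1) × Bool)

/-- The caterpillar graph: spine edges between consecutive positions, legs attached
to spine position `k+1`. -/
def catGraph (ℓ : ℕ) : SimpleGraph (CatV ℓ) where
  Adj a b :=
    match a, b with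
    | .inl i, .inl i' => i.val + 1 = i'.val ∨ i'.val + 1 = i.val
    | .inl i, .inr (k, _) => i.val = k.val + 1
    | .inr (k, _), .inl i => i.val = k.val + 1
    | .inr _, .inr _ => False
  symm := by constructor; rintro (i | ⟨k, t⟩) (i' | ⟨k', t'⟩) h <;> simp_all <;> tauto
  loopless := by constructor; rintro (i | ⟨k, t⟩) h <;> simp_all

instance (ℓ : ℕ) : DecidableRel (catGraph ℓ).Adj := fun a b =>
  match a, b with
  | .inl i, .inl i' => inferInstanceAs (Decidable (_ ∨ _))
  | .inl i, .inr (k, _) => inferInstanceAs (Decidable (_ = _))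
  | .inr (k, _), .inl i => inferInstanceAs (Decidable (_ = _))
  | .inr _, .inr _ => inferInstanceAs (Decidable False)

/-- The mirror-symmetric label `j ∈ {0,…,ℓ}` of spine position `i ∈ {0,…,2ℓ}`:
`B_0` at the two ends, `B_ℓ` at the center. -/
def jB (ℓ : ℕ) (i : Fin (2 * ℓ + 1)) : ℕ := if i.val ≤ ℓ then i.val else 2 * ℓ - i.val

/-- The label `j ∈ {1,…,ℓ}` of the leg attached at spine position `k+1`. -/
def jC (ℓ : ℕ) (k : Fin (2 * ℓ - 1)) : ℕ :=
  if k.val + 1 ≤ ℓ then k.val + 1 else 2 * ℓ - (k.val + 1)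

/-- The potential on the caterpillar graph. -/
noncomputable def catW (ℓ : ℕ) : CatV ℓ → ℝ
  | .inl i =>
      if jB ℓ i = 0 then 0 else -1/2 - (jB ℓ i : ℝ) / (4 * (ℓ : ℝ))
  | .inr (k, _) =>
      if jC ℓ k = 1 then 1 / (11/12 - 1/(8 * (ℓ : ℝ))) - 1
      else if jC ℓ k = ℓ then 7
      else 1 / (2/3 - (jC ℓ k : ℝ) / (8 * (ℓ : ℝ))) - 1

/-- The claimed ground state. -/
noncomputable def catPsi (ℓ : ℕ) : CatV ℓ → ℝ
  | .inl i =>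
      if jB ℓ i = 0 then 2/3 else (2/3 : ℝ) ^ (jB ℓ i)
  | .inr (k, _) =>
      if jC ℓ k = 1 then (2/3) * (11/12 - 1/(8 * (ℓ : ℝ)))
      else if jC ℓ k = ℓ then (1/8) * (2/3 : ℝ) ^ ℓ
      else (2/3 - (jC ℓ k : ℝ) / (8 * (ℓ : ℝ))) * (2/3 : ℝ) ^ (jC ℓ k)

/-! ### Auxiliary definitions and lemmas -/

/-- `catPsi` on the spine, as a function of the spine position. -/
noncomputable def gB (ℓ n : ℕ) : ℝ :=
  if (if n ≤ ℓ then n else 2 * ℓ - n) = 0 then 2/3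
  else (2/3 : ℝ) ^ (if n ≤ ℓ then n else 2 * ℓ - n)

/-- `catPsi` on the legs, as a function of the leg index. -/
noncomputable def gC (ℓ n : ℕ) : ℝ :=
  if (if n + 1 ≤ ℓ then n + 1 else 2 * ℓ - (n + 1)) = 1 then (2/3) * (11/12 - 1/(8 * (ℓ : ℝ)))
  else if (if n + 1 ≤ ℓ then n + 1 else 2 * ℓ - (n + 1)) = ℓ then (1/8) * (2/3 : ℝ) ^ ℓ
  else (2/3 - ((if n + 1 ≤ ℓ then n + 1 else 2 * ℓ - (n + 1)) : ℕ) / (8 * (ℓ : ℝ)) : ℝ)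
    * (2/3 : ℝ) ^ (if n + 1 ≤ ℓ then n + 1 else 2 * ℓ - (n + 1))

/-- `catW` on the spine. -/
noncomputable def wB (ℓ n : ℕ) : ℝ :=
  if (if n ≤ ℓ then n else 2 * ℓ - n) = 0 then 0
  else -1/2 - (((if n ≤ ℓ then n else 2 * ℓ - n) : ℕ) : ℝ) / (4 * (ℓ : ℝ))

/-- `catW` on the legs. -/
noncomputable def wC (ℓ n : ℕ) : ℝ :=
  if (if n + 1 ≤ ℓ then n + 1 else 2 * ℓ - (n + 1)) = 1 then 1 / (11/12 - 1/(8 * (ℓ : ℝ))) - 1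
  else if (if n + 1 ≤ ℓ then n + 1 else 2 * ℓ - (n + 1)) = ℓ then 7
  else 1 / (2/3 - ((if n + 1 ≤ ℓ then n + 1 else 2 * ℓ - (n + 1)) : ℕ) / (8 * (ℓ : ℝ)) : ℝ) - 1

lemma gB_of (ℓ n j : ℕ) (hj : (if n ≤ ℓ then n else 2 * ℓ - n) = j) (h0 : j ≠ 0) :
    gB ℓ n = (2/3 : ℝ) ^ j := by simp only [gB, hj, if_neg h0]

lemma gB_zero (ℓ n : ℕ) (hj : (if n ≤ ℓ then n else 2 * ℓ - n) = 0) :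
    gB ℓ n = 2/3 := by simp [gB, hj]

lemma wB_of (ℓ n j : ℕ) (hj : (if n ≤ ℓ then n else 2 * ℓ - n) = j) (h0 : j ≠ 0) :
    wB ℓ n = -1/2 - (j : ℝ) / (4 * (ℓ : ℝ)) := by simp only [wB, hj, if_neg h0]

lemma wB_zero (ℓ n : ℕ) (hj : (if n ≤ ℓ then n else 2 * ℓ - n) = 0) :
    wB ℓ n = 0 := by simp [wB, hj]

lemma gC_one (ℓ n : ℕ) (hj : (if n + 1 ≤ ℓ then n + 1 else 2 * ℓ - (n + 1)) = 1) :
    gC ℓ n = (2/3) * (11/12 - 1/(8 * (ℓ : ℝ))) := by rw [gC, hj]; simp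

lemma gC_top (ℓ n : ℕ) (hj : (if n + 1 ≤ ℓ then n + 1 else 2 * ℓ - (n + 1)) = ℓ) (h1 : ℓ ≠ 1) :
    gC ℓ n = (1/8) * (2/3 : ℝ) ^ ℓ := by rw [gC, hj]; simp [h1]

lemma gC_mid (ℓ n j : ℕ) (hj : (if n + 1 ≤ ℓ then n + 1 else 2 * ℓ - (n + 1)) = j)
    (h1 : j ≠ 1) (h2 : j ≠ ℓ) :
    gC ℓ n = (2/3 - (j : ℝ) / (8 * (ℓ : ℝ))) * (2/3 : ℝ) ^ j := by
  simp only [gC, hj, if_neg h1, if_neg h2]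

lemma wC_one (ℓ n : ℕ) (hj : (if n + 1 ≤ ℓ then n + 1 else 2 * ℓ - (n + 1)) = 1) :
    wC ℓ n = 1 / (11/12 - 1/(8 * (ℓ : ℝ))) - 1 := by rw [wC, hj]; simp

lemma wC_top (ℓ n : ℕ) (hj : (if n + 1 ≤ ℓ then n + 1 else 2 * ℓ - (n + 1)) = ℓ) (h1 : ℓ ≠ 1) :
    wC ℓ n = 7 := by rw [wC, hj]; simp [h1]

lemma wC_mid (ℓ n j : ℕ) (hj : (if n + 1 ≤ ℓ then n + 1 else 2 * ℓ - (n + 1)) = j)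
    (h1 : j ≠ 1) (h2 : j ≠ ℓ) :
    wC ℓ n = 1 / (2/3 - (j : ℝ) / (8 * (ℓ : ℝ))) - 1 := by
  simp only [wC, hj, if_neg h1, if_neg h2]

lemma sum_range_ite_eq' (N c : ℕ) (g : ℕ → ℝ) :
    ∑ n ∈ Finset.range N, (if c = n then g n else 0) = if c < N then g c else 0 := by
  rw [Finset.sum_ite_eq (Finset.range N) c g]; simp [Finset.mem_range]

lemma sum_range_ite_succ (N c : ℕ) (g : ℕ → ℝ) :
    ∑ n ∈ Finset.range N, (if n + 1 = c then g n else 0)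
      = if 1 ≤ c ∧ c - 1 < N then g (c - 1) else 0 := by
  cases c with
  | zero => simp
  | succ m =>
      simp only [Nat.add_right_cancel_iff, Nat.succ_sub_one]
      rw [Finset.sum_ite_eq' (Finset.range N) m g]
      simp [Finset.mem_range]

lemma ite_or_add {P Q : Prop} [Decidable P] [Decidable Q] (h : ¬(P ∧ Q)) (a : ℝ) :
    (if P ∨ Q then a else 0) = (if P then a else 0) + (if Q then a else 0) := by
  split_ifs <;> simp_all

lemma ham_mulVec {V : Type*} [Fintype V] [DecidableEq V] (G : SimpleGraph V)
    [DecidableRel G.Adj] (W : V → ℝ) (x : V → ℝ) (v : V) :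
    (hamiltonian G W *ᵥ x) v
      = (∑ u, if G.Adj v u then x v - x u else 0) + W v * x v := by
  rw [hamiltonian, add_mulVec, Pi.add_apply, SimpleGraph.lapMatrix_mulVec_apply, mulVec_diagonal]
  have h1 : (G.degree v : ℝ) * x v = ∑ u ∈ G.neighborFinset v, x v := by
    rw [Finset.sum_const, SimpleGraph.card_neighborFinset_eq_degree, nsmul_eq_mul]
  rw [h1, ← Finset.sum_sub_distrib, SimpleGraph.neighborFinset_eq_filter, Finset.sum_filter]

lemma sum_inl (ℓ : ℕ) (i : Fin (2*ℓ+1)) (c : ℝ) :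
    ∑ u : CatV ℓ, (if (catGraph ℓ).Adj (.inl i) u then c - catPsi ℓ u else 0)
      = ((if i.val + 1 < 2*ℓ+1 then c - gB ℓ (i.val+1) else 0)
      + (if 1 ≤ i.val ∧ i.val - 1 < 2*ℓ+1 then c - gB ℓ (i.val-1) else 0))
      + 2 * (if 1 ≤ i.val ∧ i.val - 1 < 2*ℓ-1 then c - gC ℓ (i.val-1) else 0) := by
  rw [Fintype.sum_sum_type]
  congr 1
  · have : ∀ i' : Fin (2*ℓ+1),
        (if (catGraph ℓ).Adj (.inl i) (.inl i') then c - catPsi ℓ (.inl i') else 0)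
        = (fun n => if i.val + 1 = n ∨ n + 1 = i.val then c - gB ℓ n else 0) i'.val := fun _ => rfl
    rw [Finset.sum_congr rfl (fun i' _ => this i'),
      Fin.sum_univ_eq_sum_range (fun n => if i.val + 1 = n ∨ n + 1 = i.val then c - gB ℓ n else 0) (2*ℓ+1)]
    rw [Finset.sum_congr rfl (fun n _ => ite_or_add (by omega) (c - gB ℓ n)),
      Finset.sum_add_distrib, sum_range_ite_eq', sum_range_ite_succ]
  · rw [Fintype.sum_prod_type]
    have : ∀ k : Fin (2*ℓ-1), ∑ t : Bool,
        (if (catGraph ℓ).Adj (.inl i) (.inr (k, t)) then c - catPsi ℓ (.inr (k, t)) else 0)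
        = (fun n => 2 * (if n + 1 = i.val then c - gC ℓ n else 0)) k.val := by
      intro k
      show (if i.val = k.val + 1 then c - gC ℓ k.val else 0)
          + ((if i.val = k.val + 1 then c - gC ℓ k.val else 0) + 0) = _
      simp only [eq_comm]
      ring
    rw [Finset.sum_congr rfl (fun k _ => this k),
      Fin.sum_univ_eq_sum_range (fun n => 2 * (if n + 1 = i.val then c - gC ℓ n else 0)) (2*ℓ-1),
      ← Finset.mul_sum, sum_range_ite_succ]

lemma sum_inr (ℓ : ℕ) (k : Fin (2*ℓ-1)) (t : Bool) (c : ℝ) :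
    ∑ u : CatV ℓ, (if (catGraph ℓ).Adj (.inr (k, t)) u then c - catPsi ℓ u else 0)
      = (if k.val + 1 < 2*ℓ+1 then c - gB ℓ (k.val+1) else 0) := by
  rw [Fintype.sum_sum_type]
  have h2 : ∀ p : Fin (2*ℓ-1) × Bool,
      (if (catGraph ℓ).Adj (.inr (k, t)) (.inr p) then c - catPsi ℓ (.inr p) else 0) = 0 := by
    rintro ⟨k', t'⟩; rfl
  rw [Finset.sum_congr rfl (fun p _ => h2 p), Finset.sum_const, smul_zero, add_zero]
  have : ∀ i' : Fin (2*ℓ+1),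
      (if (catGraph ℓ).Adj (.inr (k, t)) (.inl i') then c - catPsi ℓ (.inl i') else 0)
      = (fun n => if k.val + 1 = n then c - gB ℓ n else 0) i'.val := by
    intro i'
    show (if i'.val = k.val + 1 then c - gB ℓ i'.val else 0) = _
    simp only [eq_comm]
  rw [Finset.sum_congr rfl (fun i' _ => this i'),
    Fin.sum_univ_eq_sum_range (fun n => if k.val + 1 = n then c - gB ℓ n else 0) (2*ℓ+1),
    sum_range_ite_eq']


lemma psi_pos (ℓ : ℕ) (hℓ : 2 ≤ ℓ) (v : CatV ℓ) : 0 < catPsi ℓ v := by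
  have hL0 : (0:ℝ) < (ℓ:ℝ) := by exact_mod_cast (by omega : 0 < ℓ)
  have hL2 : (2:ℝ) ≤ (ℓ:ℝ) := by exact_mod_cast hℓ
  have h11 : (0:ℝ) < 11/12 - 1/(8*(ℓ:ℝ)) := by
    have h16 : (16:ℝ) ≤ 8*(ℓ:ℝ) := by linarith
    have := one_div_le_one_div_of_le (by norm_num : (0:ℝ) < 16) h16
    linarith
  cases v with
  | inl i =>
    show 0 < if jB ℓ i = 0 then 2/3 else (2/3:ℝ)^(jB ℓ i)
    split_ifs
    · norm_num
    · positivity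
  | inr p =>
    obtain ⟨k, t⟩ := p
    show 0 < if jC ℓ k = 1 then (2/3) * (11/12 - 1/(8 * (ℓ : ℝ)))
      else if jC ℓ k = ℓ then (1/8) * (2/3 : ℝ) ^ ℓ
      else (2/3 - (jC ℓ k : ℝ) / (8 * (ℓ : ℝ))) * (2/3 : ℝ) ^ (jC ℓ k)
    have hjle : jC ℓ k ≤ ℓ := by unfold jC; split_ifs <;> omega
    have hfrac : ((jC ℓ k : ℕ) : ℝ)/(8*(ℓ:ℝ)) ≤ 1/8 := by
      rw [div_le_div_iff₀ (by positivity) (by norm_num)]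
      have : ((jC ℓ k : ℕ):ℝ) ≤ (ℓ:ℝ) := by exact_mod_cast hjle
      linarith
    split_ifs
    · exact mul_pos (by norm_num) h11
    · positivity
    · exact mul_pos (by linarith) (by positivity)

set_option maxHeartbeats 1600000 in
lemma hpsi (ℓ : ℕ) (hℓ : 2 ≤ ℓ) (v : CatV ℓ) :
    (hamiltonian (catGraph ℓ) (catW ℓ) *ᵥ catPsi ℓ) v = 0 := by
  have hL0 : (0:ℝ) < (ℓ : ℝ) := by exact_mod_cast (by omega : 0 < ℓ)
  have hL : (ℓ : ℝ) ≠ 0 := ne_of_gt hL0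
  have hL2 : (2:ℝ) ≤ (ℓ : ℝ) := by exact_mod_cast hℓ
  have h11 : (0:ℝ) < 11/12 - 1/(8 * (ℓ : ℝ)) := by
    have h16 : (16:ℝ) ≤ 8 * (ℓ:ℝ) := by linarith
    have := one_div_le_one_div_of_le (by norm_num : (0:ℝ) < 16) h16
    linarith
  cases v with
  | inl i =>
    rw [ham_mulVec, show catW ℓ (.inl i) = wB ℓ i.val from rfl,
      show catPsi ℓ (Sum.inl i) = gB ℓ i.val from rfl, sum_inl]
    obtain ⟨n, hn⟩ := i
    simp only [Fin.val_mk]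
    by_cases hA : n = 0
    · subst hA
      rw [if_pos (by omega), if_neg (by omega), if_neg (by omega),
        gB_zero ℓ 0 (by split_ifs <;> omega),
        gB_of ℓ (0+1) 1 (by split_ifs <;> omega) one_ne_zero,
        wB_zero ℓ 0 (by split_ifs <;> omega)]
      norm_num
    by_cases hB : n = 2*ℓ
    · subst hB
      rw [if_neg (by omega), if_pos (by omega), if_neg (by omega),
        gB_zero ℓ (2*ℓ) (by split_ifs <;> omega),
        gB_of ℓ (2*ℓ-1) 1 (by split_ifs <;> omega) one_ne_zero,
        wB_zero ℓ (2*ℓ) (by split_ifs <;> omega)]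
      norm_num
    by_cases hD : n = 1
    · subst hD
      rw [if_pos (by omega), if_pos (by omega), if_pos (by omega),
        gB_of ℓ 1 1 (by split_ifs <;> omega) one_ne_zero,
        gB_of ℓ (1+1) 2 (by split_ifs <;> omega) (by omega),
        gB_zero ℓ (1-1) (by split_ifs <;> omega),
        gC_one ℓ (1-1) (by split_ifs <;> omega),
        wB_of ℓ 1 1 (by split_ifs <;> omega) one_ne_zero]
      push_cast
      field_simp
      ring
    by_cases hE : n = 2*ℓ-1
    · subst hE
      rw [if_pos (by omega), if_pos (by omega), if_pos (by omega),
        gB_of ℓ (2*ℓ-1) 1 (by split_ifs <;> omega) one_ne_zero,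
        gB_zero ℓ (2*ℓ-1+1) (by split_ifs <;> omega),
        gB_of ℓ (2*ℓ-1-1) 2 (by split_ifs <;> omega) (by omega),
        gC_one ℓ (2*ℓ-1-1) (by split_ifs <;> omega),
        wB_of ℓ (2*ℓ-1) 1 (by split_ifs <;> omega) one_ne_zero]
      push_cast
      field_simp
      ring
    by_cases hC : n = ℓ
    · rw [hC]
      rw [if_pos (by omega), if_pos (by omega), if_pos (by omega),
        gB_of ℓ ℓ ℓ (by split_ifs <;> omega) (by omega),
        gB_of ℓ (ℓ+1) (ℓ-1) (by split_ifs <;> omega) (by omega),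
        gB_of ℓ (ℓ-1) (ℓ-1) (by split_ifs <;> omega) (by omega),
        gC_top ℓ (ℓ-1) (by split_ifs <;> omega) (by omega),
        wB_of ℓ ℓ ℓ (by split_ifs <;> omega) (by omega)]
      have hp : (2/3:ℝ)^ℓ = (2/3:ℝ)^(ℓ-1) * (2/3) := by
        rw [← pow_succ]
        congr 1
        omega
      rw [hp]
      field_simp
      ring
    by_cases hlt : n < ℓ
    · -- 2 ≤ n ≤ ℓ - 1
      rw [if_pos (by omega), if_pos (by omega), if_pos (by omega),
        gB_of ℓ n n (by split_ifs <;> omega) (by omega),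
        gB_of ℓ (n+1) (n+1) (by split_ifs <;> omega) (by omega),
        gB_of ℓ (n-1) (n-1) (by split_ifs <;> omega) (by omega),
        gC_mid ℓ (n-1) n (by split_ifs <;> omega) (by omega) (by omega),
        wB_of ℓ n n (by split_ifs <;> omega) (by omega)]
      obtain ⟨m, rfl⟩ : ∃ m, n = m + 2 := ⟨n - 2, by omega⟩
      have e1 : m + 2 - 1 = m + 1 := by omega
      have p1 : (2/3:ℝ)^(m+1) = (2/3:ℝ)^m * (2/3) := pow_succ _ _
      have p2 : (2/3:ℝ)^(m+2) = (2/3:ℝ)^m * (2/3) * (2/3) := by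
        rw [show m+2 = (m+1)+1 from rfl, pow_succ, p1]
      have p3 : (2/3:ℝ)^(m+2+1) = (2/3:ℝ)^m * (2/3) * (2/3) * (2/3) := by
        rw [pow_succ, p2]
      rw [e1, p3, p2, p1]
      push_cast
      field_simp
      ring
    · -- ℓ + 1 ≤ n ≤ 2ℓ - 2
      rw [if_pos (by omega), if_pos (by omega), if_pos (by omega),
        gB_of ℓ n (2*ℓ-n) (by split_ifs <;> omega) (by omega),
        gB_of ℓ (n+1) (2*ℓ-n-1) (by split_ifs <;> omega) (by omega),
        gB_of ℓ (n-1) (2*ℓ-n+1) (by split_ifs <;> omega) (by omega),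
        gC_mid ℓ (n-1) (2*ℓ-n) (by split_ifs <;> omega) (by omega) (by omega),
        wB_of ℓ n (2*ℓ-n) (by split_ifs <;> omega) (by omega)]
      obtain ⟨m, hm⟩ : ∃ m, 2*ℓ - n = m + 2 := ⟨2*ℓ - n - 2, by omega⟩
      have e1 : 2*ℓ - n - 1 = m + 1 := by omega
      have e2 : 2*ℓ - n + 1 = m + 3 := by omega
      have p1 : (2/3:ℝ)^(m+1) = (2/3:ℝ)^m * (2/3) := pow_succ _ _
      have p2 : (2/3:ℝ)^(m+2) = (2/3:ℝ)^m * (2/3) * (2/3) := by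
        rw [show m+2 = (m+1)+1 from rfl, pow_succ, p1]
      have p3 : (2/3:ℝ)^(m+3) = (2/3:ℝ)^m * (2/3) * (2/3) * (2/3) := by
        rw [show m+3 = (m+2)+1 from rfl, pow_succ, p2]
      rw [e1, e2, hm, p3, p2, p1]
      push_cast
      field_simp
      ring
  | inr p =>
    obtain ⟨⟨n, hn⟩, t⟩ := p
    rw [ham_mulVec, show catW ℓ (.inr (⟨n, hn⟩, t)) = wC ℓ n from rfl,
      show catPsi ℓ (Sum.inr (⟨n, hn⟩, t)) = gC ℓ n from rfl, sum_inr]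
    simp only [Fin.val_mk]
    rw [if_pos (by omega)]
    by_cases hj1 : n = 0 ∨ n = 2*ℓ - 2
    · rw [gC_one ℓ n (by split_ifs <;> omega), wC_one ℓ n (by split_ifs <;> omega),
        gB_of ℓ (n+1) 1 (by split_ifs <;> omega) one_ne_zero]
      set d := (11/12 - 1/(8*(ℓ:ℝ))) with hd
      have hne : d ≠ 0 := ne_of_gt h11
      field_simp
      ring
    by_cases hjl : n = ℓ - 1
    · rw [gC_top ℓ n (by split_ifs <;> omega) (by omega),
        wC_top ℓ n (by split_ifs <;> omega) (by omega),
        gB_of ℓ (n+1) ℓ (by split_ifs <;> omega) (by omega)]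
      ring
    · have hJ1 : 2 ≤ min (n+1) (2*ℓ-(n+1)) := by omega
      have hJ2 : min (n+1) (2*ℓ-(n+1)) ≤ ℓ - 1 := by omega
      rw [gC_mid ℓ n (min (n+1) (2*ℓ-(n+1))) (by split_ifs <;> omega) (by omega) (by omega),
        wC_mid ℓ n (min (n+1) (2*ℓ-(n+1))) (by split_ifs <;> omega) (by omega) (by omega),
        gB_of ℓ (n+1) (min (n+1) (2*ℓ-(n+1))) (by split_ifs <;> omega) (by omega)]
      set J := min (n+1) (2*ℓ-(n+1)) with hJdef
      have hJr : (J:ℝ) ≤ (ℓ:ℝ) := by exact_mod_cast (by omega : J ≤ ℓ)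
      have hden : (0:ℝ) < 2/3 - (J:ℝ)/(8*(ℓ:ℝ)) := by
        have h1 : (J:ℝ)/(8*(ℓ:ℝ)) ≤ 1/8 := by
          rw [div_le_div_iff₀ (by positivity) (by norm_num)]
          linarith
        linarith
      set d := (2/3 - (J:ℝ)/(8*(ℓ:ℝ))) with hd
      have hne : d ≠ 0 := ne_of_gt hden
      field_simp
      ring

lemma groundstate {V : Type*} [Fintype V] [DecidableEq V] [Nonempty V] (G : SimpleGraph V)
    [DecidableRel G.Adj] (W : V → ℝ) (ψ : V → ℝ) (hψ : ∀ v, 0 < ψ v)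
    (heig : hamiltonian G W *ᵥ ψ = 0) :
    IsLeast (spectrum ℝ (hamiltonian G W)) 0 := by
  set H := hamiltonian G W with hH
  have hψne : ψ ≠ 0 := by
    intro h
    have := hψ (Classical.arbitrary V)
    rw [h] at this; simp at this
  have hdet : H.det = 0 := by
    rw [← Matrix.exists_mulVec_eq_zero_iff]
    exact ⟨ψ, hψne, heig⟩
  constructor
  · rw [spectrum.mem_iff]
    intro h
    rw [map_zero, zero_sub, Matrix.isUnit_iff_isUnit_det, Matrix.det_neg, hdet] at h
    simp at h
  · rintro μ hμ
    rw [spectrum.mem_iff] at hμ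
    have hdet2 : (algebraMap ℝ (Matrix V V ℝ) μ - H).det = 0 := by
      by_contra h
      exact hμ ((Matrix.isUnit_iff_isUnit_det _).mpr (isUnit_iff_ne_zero.mpr h))
    obtain ⟨x, hx0, hx⟩ := (Matrix.exists_mulVec_eq_zero_iff).mpr hdet2
    have hxev : H *ᵥ x = fun v => μ * x v := by
      funext v
      have := congrFun hx v
      rw [sub_mulVec] at this
      have h2 : (algebraMap ℝ (Matrix V V ℝ) μ *ᵥ x) v = μ * x v := by
        rw [Matrix.algebraMap_eq_diagonal, mulVec_diagonal]; rfl
      have h3 := congrArg (· + (H *ᵥ x) v) this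
      simp only [Pi.sub_apply, Pi.zero_apply, sub_add_cancel, zero_add] at h3
      rw [← h3, h2]
    have key : ∀ v, x v * (H *ᵥ x) v
        = ∑ u, (if G.Adj v u then ψ u / ψ v * x v ^ 2 - x v * x u else 0) := by
      intro v
      have hev := congrFun heig v
      rw [ham_mulVec] at hev
      simp only [Pi.zero_apply] at hev
      have hWv : W v = (∑ u, if G.Adj v u then ψ u - ψ v else 0) / ψ v := by
        rw [eq_div_iff (ne_of_gt (hψ v))]
        have : ∑ u, (if G.Adj v u then ψ u - ψ v else 0)
            = -(∑ u, if G.Adj v u then ψ v - ψ u else 0) := by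
          rw [← Finset.sum_neg_distrib]
          exact Finset.sum_congr rfl fun u _ => by split_ifs <;> ring
        rw [this]; linarith
      rw [ham_mulVec, hWv, mul_add, Finset.mul_sum]
      have e1 : x v * ((∑ u, if G.Adj v u then ψ u - ψ v else 0) / ψ v * x v)
          = ∑ u, (if G.Adj v u then ψ u - ψ v else 0) * (x v ^ 2 / ψ v) := by
        rw [← Finset.sum_mul]; ring
      rw [e1, ← Finset.sum_add_distrib]
      refine Finset.sum_congr rfl fun u _ => ?_
      have hv := (hψ v).ne'
      split_ifs with h
      · field_simp
        ring
      · simp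
    have hQ : 0 ≤ x ⬝ᵥ (H *ᵥ x) := by
      rw [dotProduct]
      simp_rw [key]
      set g : V → V → ℝ := fun v u => (if G.Adj v u then ψ u / ψ v * x v ^ 2 - x v * x u else 0)
        with hg
      have hcomm : ∑ v : V, ∑ u : V, g v u = ∑ v : V, ∑ u : V, g u v := Finset.sum_comm
      have h2 : (2:ℝ) * ∑ v : V, ∑ u : V, g v u = ∑ v : V, ∑ u : V, (g v u + g u v) := by
        rw [two_mul]
        nth_rewrite 2 [hcomm]
        rw [← Finset.sum_add_distrib]
        exact Finset.sum_congr rfl fun v _ => (Finset.sum_add_distrib).symm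
      have h3 : ∀ v u : V, 0 ≤ g v u + g u v := by
        intro v u
        simp only [hg]
        by_cases h : G.Adj v u
        · rw [if_pos h, if_pos (G.adj_symm h)]
          have hv := (hψ v).ne'
          have hu := (hψ u).ne'
          have e2 : ψ u / ψ v * x v ^ 2 - x v * x u + (ψ v / ψ u * x u ^ 2 - x u * x v)
              = (ψ u * x v - ψ v * x u) ^ 2 / (ψ v * ψ u) := by
            field_simp
            ring
          rw [e2]
          exact div_nonneg (sq_nonneg _) (le_of_lt (mul_pos (hψ v) (hψ u)))
        · rw [if_neg h, if_neg (fun h' => h (G.adj_symm h'))]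
          norm_num
      have h4 : 0 ≤ ∑ v : V, ∑ u : V, (g v u + g u v) :=
        Finset.sum_nonneg fun v _ => Finset.sum_nonneg fun u _ => h3 v u
      linarith
    have hxx : 0 < x ⬝ᵥ x := by
      rcases (dotProduct_self_eq_zero (v := x)).ne.mpr hx0 with h
      have hnn : 0 ≤ x ⬝ᵥ x := Finset.sum_nonneg fun i _ => mul_self_nonneg (x i)
      cases' lt_or_eq_of_le hnn with h' h'
      · exact h'
      · exact absurd h'.symm h
    have : μ * (x ⬝ᵥ x) = x ⬝ᵥ (H *ᵥ x) := by
      rw [hxev, dotProduct, dotProduct, Finset.mul_sum]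
      exact Finset.sum_congr rfl fun v _ => by ring
    nlinarith

/-- `catPsi ℓ` is an eigenvector of `H_{G,W}` with eigenvalue zero, has all entries
positive, and hence is the ground state: `0` is the least point of the spectrum. -/
theorem stmt_3 (ℓ : ℕ) (hℓ : 2 ≤ ℓ) :
    (hamiltonian (catGraph ℓ) (catW ℓ)) *ᵥ (catPsi ℓ) = (0 : ℝ) • (catPsi ℓ) ∧
      (∀ v, 0 < catPsi ℓ v) ∧
      IsLeast (spectrum ℝ (hamiltonian (catGraph ℓ) (catW ℓ))) 0 := by
  have hpos : ∀ v, 0 < catPsi ℓ v := psi_pos ℓ hℓ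
  have heig : hamiltonian (catGraph ℓ) (catW ℓ) *ᵥ catPsi ℓ = 0 := funext (hpsi ℓ hℓ)
  have : Nonempty (CatV ℓ) := ⟨.inl ⟨0, by omega⟩⟩
  exact ⟨by rw [heig, zero_smul], hpos, groundstate _ _ _ hpos heig⟩
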